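/- Let σx = !![0, 1; 1, 0], σz = !![1, 0; 0, −1] ∈ Matrix (Fin 2) (Fin 2) ℂ, and let W ∈ Matrix ((Fin 2 × Fin 2) × (Fin 2 × Fin 2)) ((Fin 2 × Fin 2) × (Fin 2 × Fin 2)) ℂ be defined via Kronecker products with tensor factor order (A₁, A₂, B₁, B₂) as W := (1/4)·(1 ⊗ 1 ⊗ 1 ⊗ 1 + (1/√2)·(1 ⊗ σz ⊗ σz ⊗ 1 + σz ⊗ 1 ⊗ σx ⊗ σz)). Then W is positive semidefinite. -/

import Mathlib

open Matrix Kronecker ComplexOrder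

noncomputable section

/-- Pauli matrix σx. -/
def σx : Matrix (Fin 2) (Fin 2) ℂ := !![0, 1; 1, 0]

/-- Pauli matrix σz. -/
def σz : Matrix (Fin 2) (Fin 2) ℂ := !![1, 0; 0, -1]

/-- The Oreshkov–Costa–Brukner process matrix
`W = (1/4)·(𝟙 + (σz^{A₂}σz^{B₁} + σz^{A₁}σx^{B₁}σz^{B₂})/√2)`,
with Kronecker tensor factor order (A₁, A₂, B₁, B₂). -/
def Wproc : Matrix ((Fin 2 × Fin 2) × (Fin 2 × Fin 2)) ((Fin 2 × Fin 2) × (Fin 2 × Fin 2)) ℂ :=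
  (1/4 : ℂ) •
    (((1 : Matrix (Fin 2) (Fin 2) ℂ) ⊗ₖ (1 : Matrix (Fin 2) (Fin 2) ℂ)) ⊗ₖ
        ((1 : Matrix (Fin 2) (Fin 2) ℂ) ⊗ₖ (1 : Matrix (Fin 2) (Fin 2) ℂ))
      + (1 / (Real.sqrt 2 : ℂ)) •
        (((1 : Matrix (Fin 2) (Fin 2) ℂ) ⊗ₖ σz) ⊗ₖ (σz ⊗ₖ (1 : Matrix (Fin 2) (Fin 2) ℂ))
          + (σz ⊗ₖ (1 : Matrix (Fin 2) (Fin 2) ℂ)) ⊗ₖ (σx ⊗ₖ σz)))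

namespace WprocAux

/-- First term: `1 ⊗ σz ⊗ σz ⊗ 1`. -/
def A : Matrix ((Fin 2 × Fin 2) × (Fin 2 × Fin 2)) ((Fin 2 × Fin 2) × (Fin 2 × Fin 2)) ℂ :=
  ((1 : Matrix (Fin 2) (Fin 2) ℂ) ⊗ₖ σz) ⊗ₖ (σz ⊗ₖ (1 : Matrix (Fin 2) (Fin 2) ℂ))

/-- Second term: `σz ⊗ 1 ⊗ σx ⊗ σz`. -/
def B : Matrix ((Fin 2 × Fin 2) × (Fin 2 × Fin 2)) ((Fin 2 × Fin 2) × (Fin 2 × Fin 2)) ℂ :=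
  (σz ⊗ₖ (1 : Matrix (Fin 2) (Fin 2) ℂ)) ⊗ₖ (σx ⊗ₖ σz)

lemma kronecker_conjT {n m : Type*} (M : Matrix n n ℂ) (N : Matrix m m ℂ) :
    (M ⊗ₖ N)ᴴ = Mᴴ ⊗ₖ Nᴴ := by
  ext ⟨i, j⟩ ⟨k, l⟩
  simp [conjTranspose_apply, kroneckerMap_apply, star_mul', mul_comm]

lemma σx_herm : σxᴴ = σx := by
  ext i j; fin_cases i <;> fin_cases j <;> simp [σx, conjTranspose_apply]

lemma σz_herm : σzᴴ = σz := by
  ext i j; fin_cases i <;> fin_cases j <;> simp [σz, conjTranspose_apply]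

lemma σz_mul_σz : σz * σz = 1 := by
  ext i j; fin_cases i <;> fin_cases j <;>
    simp [σz, Matrix.mul_apply, Fin.sum_univ_two, Matrix.one_apply]

lemma σx_mul_σx : σx * σx = 1 := by
  ext i j; fin_cases i <;> fin_cases j <;>
    simp [σx, Matrix.mul_apply, Fin.sum_univ_two, Matrix.one_apply]

lemma anticomm : σz * σx = -(σx * σz) := by
  ext i j; fin_cases i <;> fin_cases j <;>
    simp [σx, σz, Matrix.mul_apply, Fin.sum_univ_two]

lemma A_herm : Aᴴ = A := by
  simp [A, kronecker_conjT, σz_herm, conjTranspose_one]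

lemma B_herm : Bᴴ = B := by
  simp [B, kronecker_conjT, σz_herm, σx_herm, conjTranspose_one]

lemma A_mul_A : A * A = 1 := by
  simp [A, ← mul_kronecker_mul, σz_mul_σz, one_kronecker_one]

lemma B_mul_B : B * B = 1 := by
  simp [B, ← mul_kronecker_mul, σz_mul_σz, σx_mul_σx, one_kronecker_one]

lemma neg_kron {n m : Type*} (M : Matrix n n ℂ) (N : Matrix m m ℂ) :
    (-M) ⊗ₖ N = -(M ⊗ₖ N) := by
  ext ⟨i, j⟩ ⟨k, l⟩; simp [kroneckerMap_apply]

lemma kron_neg {n m : Type*} (M : Matrix n n ℂ) (N : Matrix m m ℂ) :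
    M ⊗ₖ (-N) = -(M ⊗ₖ N) := by
  ext ⟨i, j⟩ ⟨k, l⟩; simp [kroneckerMap_apply]

lemma A_mul_B : A * B = -(B * A) := by
  simp only [A, B, ← mul_kronecker_mul, Matrix.one_mul, Matrix.mul_one, anticomm]
  rw [neg_kron, kron_neg]

/-- `P = 𝟙 + (A + B)/√2`. -/
def P : Matrix ((Fin 2 × Fin 2) × (Fin 2 × Fin 2)) ((Fin 2 × Fin 2) × (Fin 2 × Fin 2)) ℂ :=
  1 + (1 / (Real.sqrt 2 : ℂ)) • (A + B)

lemma c_conj : star (1 / (Real.sqrt 2 : ℂ)) = 1 / (Real.sqrt 2 : ℂ) := by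
  simp [Complex.star_def]

lemma c_sq : (1 / (Real.sqrt 2 : ℂ)) * (1 / (Real.sqrt 2 : ℂ)) = 1 / 2 := by
  have h : (Real.sqrt 2 : ℂ) * (Real.sqrt 2 : ℂ) = 2 := by
    rw [← Complex.ofReal_mul]
    norm_num [Real.mul_self_sqrt]
  field_simp [h]
  rw [sq, h]

lemma P_herm : Pᴴ = P := by
  simp [P, conjTranspose_add, conjTranspose_smul, c_conj, A_herm, B_herm]

lemma P_sq : P * P = (2 : ℂ) • P := by
  simp only [P, Matrix.add_mul, Matrix.mul_add, Matrix.one_mul, Matrix.mul_one,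
    Matrix.smul_mul, Matrix.mul_smul, A_mul_A, B_mul_B, A_mul_B, smul_smul, c_sq,
    smul_add]
  module

end WprocAux

open WprocAux in
/-- The Oreshkov–Costa–Brukner process matrix is positive semidefinite. -/
theorem Wproc_posSemidef : Wproc.PosSemidef := by
  set r : ℂ := (((2 * Real.sqrt 2)⁻¹ : ℝ) : ℂ) with hr
  have hrr : star r * r * 2 = 1 / 4 := by
    have h2 : Real.sqrt 2 * Real.sqrt 2 = 2 := Real.mul_self_sqrt (by norm_num)
    rw [hr, Complex.star_def, Complex.conj_ofReal, ← Complex.ofReal_mul]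
    rw [show ((2 * Real.sqrt 2)⁻¹ * (2 * Real.sqrt 2)⁻¹ : ℝ) = 1 / 8 by
      rw [← mul_inv]; rw [show (2 * Real.sqrt 2) * (2 * Real.sqrt 2) = 8 by
        nlinarith [h2]]; norm_num]
    norm_num
  have hW : Wproc = (r • P)ᴴ * (r • P) := by
    rw [conjTranspose_smul, Matrix.smul_mul, Matrix.mul_smul, smul_smul, P_herm, P_sq,
      smul_smul, hrr, Wproc, P, A, B, one_kronecker_one, one_kronecker_one]
  rw [hW]
  exact posSemidef_conjTranspose_mul_self _

end
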